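/- arXiv:2303.03522 — 5 statements merged into one kernel-verified Lean document; each statement's English description precedes it below -/
import Mathlib

section
/- For every integrable real random variable X and every α ∈ (0,1), there exists a unique real number x such that α·E[(X−x)₊] = (1−α)·E[(x−X)₊]. (This unique x is the α-expectile e_α(X).) -/
open MeasureTheory

/-- For every integrable real random variable `X` and every `α ∈ (0,1)`,
there exists a unique `x ∈ ℝ` with `α · E[(X−x)₊] = (1−α) · E[(x−X)₊]`. -/
theorem expectile_existsUnique
    {Ω : Type*} [MeasurableSpace Ω] (μ : Measure Ω) [IsProbabilityMeasure μ]
    (X : Ω → ℝ) (hX : Integrable X μ) (α : ℝ) (hα : α ∈ Set.Ioo (0 : ℝ) 1) :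
    ∃! x : ℝ,
      α * ∫ ω, max (X ω - x) 0 ∂μ = (1 - α) * ∫ ω, max (x - X ω) 0 ∂μ := by
  obtain ⟨hα0, hα1⟩ := hα
  set m : ℝ := min α (1 - α) with hm
  have hm0 : 0 < m := lt_min hα0 (by linarith)
  have hmα : m ≤ α := min_le_left _ _
  have hmα' : m ≤ 1 - α := min_le_right _ _
  have hint1 : ∀ x : ℝ, Integrable (fun ω => max (X ω - x) 0) μ := fun x =>
    (hX.sub (integrable_const x)).pos_part
  have hint2 : ∀ x : ℝ, Integrable (fun ω => max (x - X ω) 0) μ := fun x =>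
    ((integrable_const x).sub hX).pos_part
  set g : ℝ → ℝ := fun x =>
    α * ∫ ω, max (X ω - x) 0 ∂μ - (1 - α) * ∫ ω, max (x - X ω) 0 ∂μ with hg
  -- Key monotonicity estimate
  have key : ∀ x y : ℝ, x ≤ y → m * (y - x) ≤ g x - g y ∧ g x - g y ≤ y - x := by
    intro x y hxy
    set A : ℝ := ∫ ω, (max (X ω - x) 0 - max (X ω - y) 0) ∂μ with hA
    set B : ℝ := ∫ ω, (max (y - X ω) 0 - max (x - X ω) 0) ∂μ with hB
    have hAeq : (∫ ω, max (X ω - x) 0 ∂μ) - (∫ ω, max (X ω - y) 0 ∂μ) = A :=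
      (integral_sub (hint1 x) (hint1 y)).symm
    have hBeq : (∫ ω, max (y - X ω) 0 ∂μ) - (∫ ω, max (x - X ω) 0 ∂μ) = B :=
      (integral_sub (hint2 y) (hint2 x)).symm
    have hA0 : 0 ≤ A := by
      refine integral_nonneg fun ω => ?_
      simp only [Pi.zero_apply]
      have : max (X ω - y) 0 ≤ max (X ω - x) 0 :=
        max_le_max (by linarith) le_rfl
      linarith
    have hB0 : 0 ≤ B := by
      refine integral_nonneg fun ω => ?_
      simp only [Pi.zero_apply]
      have : max (x - X ω) 0 ≤ max (y - X ω) 0 :=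
        max_le_max (by linarith) le_rfl
      linarith
    have hAB : A + B = y - x := by
      have : A + B = ∫ ω, ((max (X ω - x) 0 - max (X ω - y) 0)
          + (max (y - X ω) 0 - max (x - X ω) 0)) ∂μ :=
        (integral_add ((hint1 x).sub (hint1 y)) ((hint2 y).sub (hint2 x))).symm
      rw [this]
      have hpt : ∀ ω, (max (X ω - x) 0 - max (X ω - y) 0)
          + (max (y - X ω) 0 - max (x - X ω) 0) = y - x := by
        intro ω
        have h1 : max (X ω - x) 0 - max (x - X ω) 0 = X ω - x := by
          have := max_zero_sub_max_neg_zero_eq_self (X ω - x)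
          rwa [neg_sub] at this
        have h2 : max (X ω - y) 0 - max (y - X ω) 0 = X ω - y := by
          have := max_zero_sub_max_neg_zero_eq_self (X ω - y)
          rwa [neg_sub] at this
        linarith
      rw [integral_congr_ae (Filter.Eventually.of_forall hpt), integral_const]
      simp
    have hgdiff : g x - g y = α * A + (1 - α) * B := by
      simp only [hg]
      rw [← hAeq, ← hBeq]; ring
    constructor
    · rw [hgdiff]
      nlinarith
    · rw [hgdiff]
      nlinarith
  -- g is Lipschitz, hence continuous
  have hcont : Continuous g := by
    have hlip : ∀ x y : ℝ, |g x - g y| ≤ |x - y| := by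
      intro x y
      rcases le_total x y with h | h
      · have h2 := key x y h
        have h1 : 0 ≤ g x - g y := le_trans (by nlinarith [h2.1]) h2.1
        rw [abs_of_nonneg h1, abs_of_nonpos (by linarith)]
        linarith [h2.2]
      · have h2 := key y x h
        have h1 : 0 ≤ g y - g x := le_trans (by nlinarith [h2.1]) h2.1
        rw [abs_of_nonpos (by linarith), abs_of_nonneg (by linarith)]
        linarith [h2.2]
    have : LipschitzWith 1 g := by
      refine LipschitzWith.of_dist_le_mul fun x y => ?_
      rw [Real.dist_eq, Real.dist_eq, NNReal.coe_one, one_mul]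
      exact hlip x y
    exact this.continuous
  -- existence of a zero via IVT
  set t : ℝ := (|g 0| + 1) / m with ht
  have ht0 : 0 < t := div_pos (by positivity) hm0
  have hgt : g t ≤ -1 := by
    have := (key 0 t ht0.le).1
    have hmt : m * t = |g 0| + 1 := by
      rw [ht]; field_simp [hm0.ne']
    have habs := abs_nonneg (g 0)
    have := neg_abs_le (g 0)
    nlinarith [(key 0 t ht0.le).1, le_abs_self (g 0)]
  have hgnt : 1 ≤ g (-t) := by
    have hmt : m * (0 - (-t)) = |g 0| + 1 := by
      rw [ht]; field_simp [hm0.ne']; ring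
    nlinarith [(key (-t) 0 (by linarith)).1, neg_abs_le (g 0)]
  have hsub : Set.Icc (g t) (g (-t)) ⊆ g '' Set.Icc (-t) t :=
    intermediate_value_Icc' (by linarith) hcont.continuousOn
  have h0 : (0 : ℝ) ∈ Set.Icc (g t) (g (-t)) := ⟨by linarith, by linarith⟩
  obtain ⟨c, _, hc⟩ := hsub h0
  refine ⟨c, ?_, ?_⟩
  · have : g c = 0 := hc
    simp only [hg] at this
    linarith
  · intro y hy
    have hgy : g y = 0 := by simp only [hg]; linarith
    have hgc : g c = 0 := hc
    rcases lt_trichotomy y c with h | h | h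
    · exfalso
      have := (key y c h.le).1
      nlinarith
    · exact h
    · exfalso
      have := (key c y h.le).1
      nlinarith
end

section
/- Subadditivity of expectiles: for α ∈ [1/2, 1) and integrable X, Y, it holds that e_α(X + Y) ≤ e_α(X) + e_α(Y). -/
open MeasureTheory

private lemma max_neg_eq (u : ℝ) : max (-u) 0 = max u 0 - u := by
  rcases le_total u 0 with h | h
  · rw [max_eq_left (neg_nonneg.2 h), max_eq_right h]; ring
  · rw [max_eq_right (neg_nonpos.2 h), max_eq_left h]; ring

private lemma hfun_subadd (α a b u v : ℝ) (h1 : (1:ℝ)/2 ≤ α) :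
    α * max (a + b - (u + v)) 0 - (1 - α) * max (u + v - (a + b)) 0 ≤
      (α * max (a - u) 0 - (1 - α) * max (u - a) 0) +
        (α * max (b - v) 0 - (1 - α) * max (v - b) 0) := by
  have e1 : u + v - (a + b) = -(a + b - (u + v)) := by ring
  have e2 : u - a = -(a - u) := by ring
  have e3 : v - b = -(b - v) := by ring
  rw [e1, e2, e3, max_neg_eq, max_neg_eq, max_neg_eq]
  have hm : max (a + b - (u + v)) 0 ≤ max (a - u) 0 + max (b - v) 0 := by
    apply max_le _ (by positivity)
    have h4 : a + b - (u + v) = (a - u) + (b - v) := by ring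
    rw [h4]; exact add_le_add (le_max_left _ _) (le_max_left _ _)
  nlinarith [mul_nonneg (by linarith : (0:ℝ) ≤ 2 * α - 1)
    (by linarith : (0:ℝ) ≤ max (a - u) 0 + max (b - v) 0 - max (a + b - (u + v)) 0)]

private lemma hfun_mono (α s t t' : ℝ) (h1 : (1:ℝ)/2 ≤ α) (h2 : t ≤ t') :
    α * max (s - t') 0 - (1 - α) * max (t' - s) 0 + (1 - α) * (t' - t) ≤
      α * max (s - t) 0 - (1 - α) * max (t - s) 0 := by
  have e1 : t' - s = -(s - t') := by ring
  have e2 : t - s = -(s - t) := by ring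
  rw [e1, e2, max_neg_eq, max_neg_eq]
  have hm : max (s - t') 0 ≤ max (s - t) 0 :=
    max_le (le_max_of_le_left (by linarith)) (le_max_right _ _)
  nlinarith [mul_nonneg (by linarith : (0:ℝ) ≤ 2 * α - 1)
    (by linarith : (0:ℝ) ≤ max (s - t) 0 - max (s - t') 0)]

private lemma integral_comb {Ω : Type*} [MeasurableSpace Ω] (μ : Measure Ω) (c d : ℝ)
    (f g : Ω → ℝ) (hf : Integrable f μ) (hg : Integrable g μ) :
    ∫ ω, (c * f ω - d * g ω) ∂μ = c * ∫ ω, f ω ∂μ - d * ∫ ω, g ω ∂μ := by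
  rw [integral_sub (hf.const_mul c) (hg.const_mul d), integral_const_mul, integral_const_mul]

/-- Subadditivity of expectiles: for `α ∈ [1/2, 1)` and integrable `X`, `Y`
on the same probability space, `e_α(X + Y) ≤ e_α(X) + e_α(Y)`. -/
theorem expectile_subadditive
    {Ω : Type*} [MeasurableSpace Ω] (μ : Measure Ω) [IsProbabilityMeasure μ]
    (X Y : Ω → ℝ) (hX : Integrable X μ) (hY : Integrable Y μ)
    (α : ℝ) (hα : α ∈ Set.Ico (1 / 2 : ℝ) 1) (x y z : ℝ)
    (hx : α * ∫ ω, max (X ω - x) 0 ∂μ = (1 - α) * ∫ ω, max (x - X ω) 0 ∂μ)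
    (hy : α * ∫ ω, max (Y ω - y) 0 ∂μ = (1 - α) * ∫ ω, max (y - Y ω) 0 ∂μ)
    (hz : α * ∫ ω, max (X ω + Y ω - z) 0 ∂μ =
        (1 - α) * ∫ ω, max (z - (X ω + Y ω)) 0 ∂μ) :
    z ≤ x + y := by
  obtain ⟨hα1, hα2⟩ := hα
  by_contra hc
  push_neg at hc
  -- integrability
  have iX1 : Integrable (fun ω => max (X ω - x) 0) μ := (hX.sub (integrable_const x)).pos_part
  have iX2 : Integrable (fun ω => max (x - X ω) 0) μ := ((integrable_const x).sub hX).pos_part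
  have iY1 : Integrable (fun ω => max (Y ω - y) 0) μ := (hY.sub (integrable_const y)).pos_part
  have iY2 : Integrable (fun ω => max (y - Y ω) 0) μ := ((integrable_const y).sub hY).pos_part
  have hXY : Integrable (fun ω => X ω + Y ω) μ := hX.add hY
  have iZ1 : Integrable (fun ω => max (X ω + Y ω - (x + y)) 0) μ :=
    (hXY.sub (integrable_const (x + y))).pos_part
  have iZ2 : Integrable (fun ω => max ((x + y) - (X ω + Y ω)) 0) μ :=
    ((integrable_const (x + y)).sub hXY).pos_part
  have iW1 : Integrable (fun ω => max (X ω + Y ω - z) 0) μ :=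
    (hXY.sub (integrable_const z)).pos_part
  have iW2 : Integrable (fun ω => max (z - (X ω + Y ω)) 0) μ :=
    ((integrable_const z).sub hXY).pos_part
  have jX : Integrable (fun ω => α * max (X ω - x) 0 - (1 - α) * max (x - X ω) 0) μ :=
    (iX1.const_mul α).sub (iX2.const_mul (1 - α))
  have jY : Integrable (fun ω => α * max (Y ω - y) 0 - (1 - α) * max (y - Y ω) 0) μ :=
    (iY1.const_mul α).sub (iY2.const_mul (1 - α))
  have jZ : Integrable (fun ω => α * max (X ω + Y ω - (x + y)) 0
      - (1 - α) * max ((x + y) - (X ω + Y ω)) 0) μ :=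
    (iZ1.const_mul α).sub (iZ2.const_mul (1 - α))
  have jW : Integrable (fun ω => α * max (X ω + Y ω - z) 0
      - (1 - α) * max (z - (X ω + Y ω)) 0) μ :=
    (iW1.const_mul α).sub (iW2.const_mul (1 - α))
  -- Step A: subadditivity of the loss functional
  have hA : α * ∫ ω, max (X ω + Y ω - (x + y)) 0 ∂μ
      - (1 - α) * ∫ ω, max ((x + y) - (X ω + Y ω)) 0 ∂μ ≤ 0 := by
    have hpt : ∀ ω, α * max (X ω + Y ω - (x + y)) 0 - (1 - α) * max ((x + y) - (X ω + Y ω)) 0 ≤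
        ((α * max (X ω - x) 0 - (1 - α) * max (x - X ω) 0) +
          (α * max (Y ω - y) 0 - (1 - α) * max (y - Y ω) 0)) := fun ω =>
      hfun_subadd α (X ω) (Y ω) x y hα1
    have hint : ∫ ω, (α * max (X ω + Y ω - (x + y)) 0
          - (1 - α) * max ((x + y) - (X ω + Y ω)) 0) ∂μ ≤
        ∫ ω, ((α * max (X ω - x) 0 - (1 - α) * max (x - X ω) 0) +
          (α * max (Y ω - y) 0 - (1 - α) * max (y - Y ω) 0)) ∂μ := by
      exact integral_mono jZ (jX.add jY) hpt
    rw [integral_comb μ α (1 - α) _ _ iZ1 iZ2,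
      integral_add jX jY,
      integral_comb μ α (1 - α) _ _ iX1 iX2,
      integral_comb μ α (1 - α) _ _ iY1 iY2] at hint
    linarith [hint]
  -- Step B: monotonicity of the loss functional
  have hB : α * ∫ ω, max (X ω + Y ω - z) 0 ∂μ
        - (1 - α) * ∫ ω, max (z - (X ω + Y ω)) 0 ∂μ + (1 - α) * (z - (x + y)) ≤
      α * ∫ ω, max (X ω + Y ω - (x + y)) 0 ∂μ
        - (1 - α) * ∫ ω, max ((x + y) - (X ω + Y ω)) 0 ∂μ := by
    have hpt : ∀ ω, (α * max (X ω + Y ω - z) 0 - (1 - α) * max (z - (X ω + Y ω)) 0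
          + (1 - α) * (z - (x + y))) ≤
        α * max (X ω + Y ω - (x + y)) 0 - (1 - α) * max ((x + y) - (X ω + Y ω)) 0 := fun ω =>
      hfun_mono α (X ω + Y ω) (x + y) z hα1 hc.le
    have hint : ∫ ω, (α * max (X ω + Y ω - z) 0 - (1 - α) * max (z - (X ω + Y ω)) 0
          + (1 - α) * (z - (x + y))) ∂μ ≤
        ∫ ω, (α * max (X ω + Y ω - (x + y)) 0
          - (1 - α) * max ((x + y) - (X ω + Y ω)) 0) ∂μ := by
      exact integral_mono (jW.add (integrable_const _)) jZ hpt
    rw [integral_add jW (integrable_const _),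
      integral_comb μ α (1 - α) _ _ iW1 iW2,
      integral_comb μ α (1 - α) _ _ iZ1 iZ2, integral_const] at hint
    simpa using hint
  have h0 : (0:ℝ) < (1 - α) * (z - (x + y)) :=
    mul_pos (by linarith) (by linarith)
  linarith [hA, hB, hz]
end

section
/- For a bounded random variable X, the expectile converges to the essential supremum as the risk level tends to 1: lim_{α→1⁻} e_α(X) = ess sup X. -/
open MeasureTheory Filter

/-- For a bounded random variable `X`, the expectile converges to the
essential supremum as the risk level tends to `1` from below:
`lim_{α→1⁻} e_α(X) = ess sup X`. -/
theorem expectile_tendsto_essSup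
    {Ω : Type*} [MeasurableSpace Ω] (μ : Measure Ω) [IsProbabilityMeasure μ]
    (X : Ω → ℝ) (hX : Integrable X μ) (hbdd : ∃ C : ℝ, ∀ᵐ ω ∂μ, |X ω| ≤ C)
    (e : ℝ → ℝ)
    (he : ∀ α ∈ Set.Ioo (0 : ℝ) 1,
      α * ∫ ω, max (X ω - e α) 0 ∂μ = (1 - α) * ∫ ω, max (e α - X ω) 0 ∂μ) :
    Filter.Tendsto e (nhdsWithin 1 (Set.Iio 1)) (nhds (essSup X μ)) := by
  obtain ⟨C, hC⟩ := hbdd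
  set M := essSup X μ with hM
  have haeNeBot : (ae μ).NeBot := ae_neBot.mpr (IsProbabilityMeasure.ne_zero μ)
  have hC0 : (0 : ℝ) ≤ C := by
    obtain ⟨ω, hω⟩ := hC.exists
    exact le_trans (abs_nonneg _) hω
  have hXle : ∀ᵐ ω ∂μ, X ω ≤ C := hC.mono fun ω h => (abs_le.mp h).2
  have hXge : ∀ᵐ ω ∂μ, -C ≤ X ω := hC.mono fun ω h => (abs_le.mp h).1
  have hbUnder : IsBoundedUnder (· ≤ ·) (ae μ) X := ⟨C, eventually_map.mpr hXle⟩
  have hbUnder' : IsBoundedUnder (· ≥ ·) (ae μ) X := ⟨-C, eventually_map.mpr hXge⟩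
  have hXleM : ∀ᵐ ω ∂μ, X ω ≤ M := ae_le_essSup hbUnder
  have hMC : M ≤ C := limsup_le_of_le hbUnder'.isCoboundedUnder_le hXle
  -- integrability of the two max functions at any level x
  have hint1 : ∀ x : ℝ, Integrable (fun ω => max (X ω - x) 0) μ := fun x =>
    (hX.sub (integrable_const x)).pos_part
  have hint2 : ∀ x : ℝ, Integrable (fun ω => max (x - X ω) 0) μ := fun x =>
    ((integrable_const x).sub hX).pos_part
  -- upper bound: e α ≤ M
  have hub : ∀ α ∈ Set.Ioo (0 : ℝ) 1, e α ≤ M := by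
    intro α hα
    by_contra hlt
    push_neg at hlt
    have h0 : ∫ ω, max (X ω - e α) 0 ∂μ = 0 := by
      have hz : (fun ω => max (X ω - e α) 0) =ᵐ[μ] fun _ => (0 : ℝ) :=
        hXleM.mono fun ω hω => by
          have : X ω - e α ≤ 0 := by linarith
          simp [max_eq_right this]
      rw [integral_congr_ae hz, integral_zero]
    have heq := he α hα
    rw [h0, mul_zero] at heq
    have h1pos : (0 : ℝ) < 1 - α := by linarith [hα.2]
    have hR0 : ∫ ω, max (e α - X ω) 0 ∂μ = 0 := by
      rcases mul_eq_zero.mp heq.symm with h | h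
      · linarith
      · exact h
    have hge : e α - ∫ ω, X ω ∂μ ≤ ∫ ω, max (e α - X ω) 0 ∂μ := by
      have h1 : ∫ ω, (e α - X ω) ∂μ ≤ ∫ ω, max (e α - X ω) 0 ∂μ :=
        integral_mono ((integrable_const (e α)).sub hX) (hint2 (e α))
          fun ω => le_max_left _ _
      have h2 : ∫ ω, (e α - X ω) ∂μ = e α - ∫ ω, X ω ∂μ := by
        rw [integral_sub (integrable_const (e α)) hX]
        simp
      linarith
    have hXM : ∫ ω, X ω ∂μ ≤ M := by
      calc ∫ ω, X ω ∂μ ≤ ∫ _, M ∂μ := integral_mono_ae hX (integrable_const M) hXleM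
        _ = M := by simp
    linarith
  -- measurable version of X
  set Y := hX.1.mk X with hYdef
  have hYmeas : StronglyMeasurable Y := hX.1.stronglyMeasurable_mk
  have hXY : X =ᵐ[μ] Y := hX.1.ae_eq_mk
  have hMY : essSup Y μ = M := (essSup_congr_ae hXY).symm
  -- main estimate
  rw [Metric.tendsto_nhds]
  intro ε hε
  -- the set where Y is close to its essential sup
  set A : Set Ω := Y ⁻¹' Set.Ioi (M - ε / 2) with hA
  have hAmeas : MeasurableSet A := hYmeas.measurable measurableSet_Ioi
  have hAne : μ A ≠ 0 := by
    have hfreq : ∃ᶠ ω in ae μ, M - ε / 2 < Y ω := by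
      refine frequently_lt_of_lt_limsup ?_ ?_
      · refine IsBoundedUnder.isCoboundedUnder_le ⟨-C, eventually_map.mpr ?_⟩
        filter_upwards [hXY, hXge] with ω h1 h2
        rw [← h1]; exact h2
      · rw [show limsup Y (ae μ) = essSup Y μ from rfl, hMY]; linarith
    exact frequently_ae_iff.mp hfreq
  set p : ℝ := (μ A).toReal with hp
  have hppos : 0 < p := ENNReal.toReal_pos hAne (measure_ne_top μ A)
  set D : ℝ := ε / 2 * p with hD
  have hDpos : 0 < D := by positivity
  set α₀ : ℝ := max (2 * C / (D + 2 * C)) (1 / 2) with hα₀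
  have hα₀lt : α₀ < 1 := by
    refine max_lt ?_ (by norm_num)
    rw [div_lt_one (by positivity)]
    linarith
  have key : Set.Ioo α₀ 1 ∈ nhdsWithin (1 : ℝ) (Set.Iio 1) :=
    Ioo_mem_nhdsLT_of_mem ⟨hα₀lt, le_refl 1⟩
  filter_upwards [key] with α hαmem
  have hα1 : α < 1 := hαmem.2
  have hα0 : 0 < α := lt_of_le_of_lt (by norm_num) (lt_of_le_of_lt (le_max_right _ _) hαmem.1)
  have hαIoo : α ∈ Set.Ioo (0 : ℝ) 1 := ⟨hα0, hα1⟩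
  have hαbig : 2 * C / (D + 2 * C) < α := lt_of_le_of_lt (le_max_left _ _) hαmem.1
  have hαD : (1 - α) * (2 * C) < α * D := by
    have := (div_lt_iff₀ (by positivity : (0:ℝ) < D + 2 * C)).mp hαbig
    nlinarith
  -- lower bound: M - ε < e α
  have hlb : M - ε < e α := by
    by_contra hcon
    push_neg at hcon
    -- LHS integral is at least (ε/2) * p
    have hLHS : ε / 2 * p ≤ ∫ ω, max (X ω - e α) 0 ∂μ := by
      have hcongr : ∫ ω, max (X ω - e α) 0 ∂μ = ∫ ω, max (Y ω - e α) 0 ∂μ :=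
        integral_congr_ae (hXY.mono fun ω hω => by simp only [hω])
      have hYint : Integrable (fun ω => max (Y ω - e α) 0) μ :=
        (hint1 (e α)).congr (hXY.mono fun ω hω => by simp only [hω])
      have hset : ε / 2 * p ≤ ∫ ω in A, max (Y ω - e α) 0 ∂μ := by
        refine setIntegral_ge_of_const_le_real hAmeas (measure_ne_top μ A) ?_ hYint.integrableOn
        intro ω hω
        have h1 : M - ε / 2 < Y ω := hω
        have : ε / 2 ≤ Y ω - e α := by linarith
        exact le_trans this (le_max_left _ _)
      have hsetle : ∫ ω in A, max (Y ω - e α) 0 ∂μ ≤ ∫ ω, max (Y ω - e α) 0 ∂μ :=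
        setIntegral_le_integral hYint (Eventually.of_forall fun ω => le_max_right _ _)
      linarith
    -- RHS integral is at most 2C
    have hRHS : ∫ ω, max (e α - X ω) 0 ∂μ ≤ 2 * C := by
      have hb : ∀ᵐ ω ∂μ, max (e α - X ω) 0 ≤ 2 * C := by
        filter_upwards [hXge] with ω hω
        have h1 : e α ≤ C := le_trans (hub α hαIoo) hMC
        have h2 : e α - X ω ≤ 2 * C := by linarith
        exact max_le h2 (by linarith)
      calc ∫ ω, max (e α - X ω) 0 ∂μ ≤ ∫ _, 2 * C ∂μ :=
            integral_mono_ae (hint2 (e α)) (integrable_const _) hb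
        _ = 2 * C := by simp
    have heq := he α hαIoo
    have h1 : α * (ε / 2 * p) ≤ α * ∫ ω, max (X ω - e α) 0 ∂μ :=
      mul_le_mul_of_nonneg_left hLHS hα0.le
    have h2 : (1 - α) * ∫ ω, max (e α - X ω) 0 ∂μ ≤ (1 - α) * (2 * C) :=
      mul_le_mul_of_nonneg_left hRHS (by linarith)
    rw [heq] at h1
    rw [hD] at hαD
    linarith
  have hle : e α ≤ M := hub α hαIoo
  rw [Real.dist_eq, abs_sub_lt_iff]
  constructor <;> linarith
end

section
/- For α ∈ (1/2,1), β := α/(1−α), γ ∈ (1/β, 1), define Σ_γ(u) := γ(1−u) + (1−γ)·min(1, (1−u)/(1 − (β−1/γ)/(β−1))) and Σ(u) := α(1−u)/(α − u(2α−1)) on [0,1]. Then Σ_γ(u) ≤ Σ(u) for all u ∈ [0,1], with equality at u = 0, u = 1, and u* = (α(1+γ)−1)/((2α−1)γ), where both functions take the value α(1−γ)/(2α−1) at u*. -/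
/-- For `α ∈ (1/2,1)`, `β = α/(1−α)`, `γ ∈ (1/β, 1)`, the functions
`Σ_γ(u) = γ(1−u) + (1−γ)·min(1, (1−u)/(1 − (β−1/γ)/(β−1)))` and
`Σ(u) = α(1−u)/(α − u(2α−1))` satisfy `Σ_γ ≤ Σ` on `[0,1]`, with equality at
`u = 0`, `u = 1` and `u* = (α(1+γ)−1)/((2α−1)γ)`, where both take the value
`α(1−γ)/(2α−1)` at `u*`. -/
theorem spectrum_envelope_comparison
    (α γ : ℝ) (hα : α ∈ Set.Ioo (1 / 2 : ℝ) 1)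
    (hγ : γ ∈ Set.Ioo ((α / (1 - α))⁻¹) 1) :
    let β : ℝ := α / (1 - α)
    let SigmaGamma : ℝ → ℝ := fun u =>
      γ * (1 - u) + (1 - γ) * min 1 ((1 - u) / (1 - (β - 1 / γ) / (β - 1)))
    let Sigma : ℝ → ℝ := fun u => α * (1 - u) / (α - u * (2 * α - 1))
    let ustar : ℝ := (α * (1 + γ) - 1) / ((2 * α - 1) * γ)
    (∀ u ∈ Set.Icc (0 : ℝ) 1, SigmaGamma u ≤ Sigma u) ∧
      SigmaGamma 0 = Sigma 0 ∧ SigmaGamma 1 = Sigma 1 ∧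
      SigmaGamma ustar = Sigma ustar ∧
      SigmaGamma ustar = α * (1 - γ) / (2 * α - 1) := by
  obtain ⟨hα1, hα2⟩ := hα
  obtain ⟨hγ1, hγ2⟩ := hγ
  intro β SigmaGamma Sigma ustar
  have h2 : (0:ℝ) < 1 - α := by linarith
  have h3 : (0:ℝ) < α := by linarith
  have h1 : (0:ℝ) < 2 * α - 1 := by linarith
  have h1' : α * 2 - 1 ≠ 0 := by linarith
  have hγ1' : (1 - α) / α < γ := by
    rwa [inv_div] at hγ1
  have hγ0 : 0 < γ := lt_trans (by positivity) hγ1'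
  have h4 : (0:ℝ) < 1 - γ := by linarith
  have haγ : 1 - α < α * γ := by
    have := (div_lt_iff₀ h3).mp hγ1'
    linarith [this]
  -- the denominator expression equals E
  have hE : 1 - (β - 1 / γ) / (β - 1) = (1 - α) * (1 - γ) / (γ * (2 * α - 1)) := by
    simp only [β]
    have hb : α / (1 - α) - 1 = (2 * α - 1) / (1 - α) := by
      field_simp
      ring
    rw [hb]
    field_simp
    ring
  have hEpos : 0 < (1 - α) * (1 - γ) / (γ * (2 * α - 1)) := by positivity
  have hustar : ustar = 1 - (1 - α) * (1 - γ) / (γ * (2 * α - 1)) := by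
    simp only [ustar]
    field_simp
    ring
  have hu0 : 0 ≤ ustar := by
    simp only [ustar]
    apply div_nonneg _ (by positivity)
    nlinarith
  have hu1 : ustar ≤ 1 := by rw [hustar]; linarith
  have hd : ∀ u : ℝ, u ≤ 1 → 0 < α - u * (2 * α - 1) := by
    intro u hu
    nlinarith
  constructor
  · intro u ⟨hul, hur⟩
    have hdu := hd u hur
    have hdu' : α - u * (α * 2 - 1) ≠ 0 := by linarith
    simp only [SigmaGamma, Sigma, hE]
    rcases le_total u ustar with hc | hc
    · rw [min_eq_left]
      · rw [← sub_nonneg]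
        have key : α * (1 - u) / (α - u * (2 * α - 1)) - (γ * (1 - u) + (1 - γ) * 1)
            = (γ * (2 * α - 1) * u * (ustar - u)) / (α - u * (2 * α - 1)) := by
          rw [hustar]
          field_simp
          ring
        rw [key]
        apply div_nonneg _ (le_of_lt hdu)
        have : 0 ≤ ustar - u := by linarith
        positivity
      · rw [le_div_iff₀ hEpos, one_mul]
        rw [hustar] at hc; linarith
    · rw [min_eq_right]
      · have key : γ * (1 - u) + (1 - γ) * ((1 - u) / ((1 - α) * (1 - γ) / (γ * (2 * α - 1))))
            = (1 - u) * (α * γ) / (1 - α) := by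
          field_simp
          ring
        rw [key, div_le_div_iff₀ h2 hdu]
        have hc' : α * (1 + γ) - 1 ≤ u * ((2 * α - 1) * γ) := by
          have := (div_le_iff₀ (by positivity : (0:ℝ) < (2*α-1)*γ)).mp hc
          linarith
        nlinarith [mul_nonneg (sub_nonneg.2 hur) (le_of_lt h3),
          mul_le_mul_of_nonneg_left hc' (mul_nonneg (sub_nonneg.2 hur) (le_of_lt h3))]
      · rw [div_le_one hEpos]
        rw [hustar] at hc; linarith
  · refine ⟨?_, ?_, ?_, ?_⟩
    · simp only [SigmaGamma, Sigma, hE]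
      rw [min_eq_left]
      · field_simp
        simp [h3.ne']
      · rw [le_div_iff₀ hEpos, one_mul, sub_zero]
        rw [hustar] at hu0; linarith
    · simp only [SigmaGamma, Sigma, hE]
      norm_num
    · simp only [SigmaGamma, Sigma, hE, hustar]
      rw [min_eq_left (by rw [le_div_iff₀ hEpos, one_mul]; linarith)]
      have hdu := hd ustar hu1
      rw [hustar] at hdu
      rw [eq_div_iff (ne_of_gt hdu)]
      field_simp
      ring
    · simp only [SigmaGamma, hE, hustar]
      rw [min_eq_left (by rw [le_div_iff₀ hEpos, one_mul]; linarith)]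
      field_simp
      ring
end

section
/- Comparison with the Average Value-at-Risk: for every integrable X and α ∈ [1/2,1), e_α(X) ≤ AVaR_{2−1/α}(X), where AVaR_β(X) = inf_{q∈ℝ} { q + (1/(1−β))·E[(X−q)₊] }. -/
open MeasureTheory

/-- Comparison with the Average Value-at-Risk: for integrable `X` and
`α ∈ [1/2,1)`, `e_α(X) ≤ AVaR_{2−1/α}(X)`, where
`AVaR_β(X) = inf_{q∈ℝ} { q + (1/(1−β))·E[(X−q)₊] }`. -/
theorem expectile_le_avar
    {Ω : Type*} [MeasurableSpace Ω] (μ : Measure Ω) [IsProbabilityMeasure μ]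
    (X : Ω → ℝ) (hX : Integrable X μ)
    (α : ℝ) (hα : α ∈ Set.Ico (1 / 2 : ℝ) 1) (x : ℝ)
    (hx : α * ∫ ω, max (X ω - x) 0 ∂μ = (1 - α) * ∫ ω, max (x - X ω) 0 ∂μ) :
    x ≤ ⨅ q : ℝ, (q + (1 - (2 - 1 / α))⁻¹ * ∫ ω, max (X ω - q) 0 ∂μ) := by
  obtain ⟨hα1, hα2⟩ := hα
  have hα0 : (0:ℝ) < α := by linarith
  have h1α : (0:ℝ) < 1 - α := by linarith
  have hc : (1 - (2 - 1 / α))⁻¹ = α / (1 - α) := by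
    rw [show (1:ℝ) - (2 - 1/α) = (1-α)/α by field_simp; ring, inv_div]
  apply le_ciInf
  intro q
  rw [hc]
  set A := ∫ ω, max (X ω - q) 0 ∂μ with hA
  have hfq : Integrable (fun ω => max (X ω - q) 0) μ := (hX.sub (integrable_const q)).pos_part
  have hfx : Integrable (fun ω => max (X ω - x) 0) μ := (hX.sub (integrable_const x)).pos_part
  have hgx : Integrable (fun ω => max (x - X ω) 0) μ := ((integrable_const x).sub hX).pos_part
  have hA0 : 0 ≤ A := integral_nonneg (fun ω => le_max_right _ _)
  rcases le_total x q with h | h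
  · have : 0 ≤ α / (1-α) * A := mul_nonneg (by positivity) hA0
    linarith
  · set B := ∫ ω, max (x - X ω) 0 ∂μ with hB
    set C := ∫ ω, max (X ω - x) 0 ∂μ with hC
    have hB0 : 0 ≤ B := integral_nonneg (fun ω => le_max_right _ _)
    have hCA : C ≤ A := integral_mono hfx hfq (fun ω => max_le_max (by linarith) le_rfl)
    have key : ∀ ω, (x - q) - max (x - X ω) 0 + max (X ω - x) 0 ≤ max (X ω - q) 0 := by
      intro ω
      have h1 : max (X ω - x) 0 - max (x - X ω) 0 = X ω - x := by
        rcases le_total (X ω) x with h'|h'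
        · rw [max_eq_right (by linarith), max_eq_left (by linarith)]; ring
        · rw [max_eq_left (by linarith), max_eq_right (by linarith)]; ring
      have h2 := le_max_left (X ω - q) (0:ℝ)
      linarith
    have hint : (x - q) - B + C ≤ A := by
      have := integral_mono (((integrable_const (x-q)).sub hgx).add hfx) hfq key
      simp only [Pi.add_apply, Pi.sub_apply] at this
      have hI1 : Integrable (fun a => x - q - max (x - X a) 0) μ :=
        (integrable_const (x-q)).sub hgx
      rwa [integral_add hI1 hfx,
        integral_sub (integrable_const (x-q)) hgx, integral_const,
        probReal_univ, smul_eq_mul, one_mul] at this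
    have goal2 : (1 - α) * (x - q) ≤ α * A := by
      rcases le_total B (x - q) with hB' | hB'
      · nlinarith [mul_le_mul_of_nonneg_left hint hα0.le,
          mul_le_mul_of_nonneg_left hB' (by linarith : (0:ℝ) ≤ 2*α - 1)]
      · nlinarith [mul_le_mul_of_nonneg_left hB' h1α.le,
          mul_le_mul_of_nonneg_left hCA hα0.le]
    rw [← sub_le_iff_le_add', div_mul_eq_mul_div, le_div_iff₀ h1α]
    linarith
end
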